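/- Let τ be an infinite cardinal and let (X, ρ) be an ultrametric space having a dense subset of cardinality at most τ. Then there is an isometric embedding of X into the generalized Hilbert space H^τ, i.e., the space ℓ²(I) of square-summable real-valued families indexed by a set I of cardinality τ, with its ℓ²-norm. -/

import Mathlib

universe u v



theorem double_sum_const {X : Type u} (t u : Finset X) (c : X → ℝ) (k : ℝ) :
    ∑ x ∈ t, ∑ y ∈ u, c x * c y * k = k * ((∑ x ∈ t, c x) * ∑ y ∈ u, c y) := by
  have inner : ∀ x, ∑ y ∈ u, c x * c y * k = c x * k * ∑ y ∈ u, c y := by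
    intro x
    rw [Finset.mul_sum]
    exact Finset.sum_congr rfl fun y _ => by ring
  rw [Finset.sum_congr rfl fun x _ => inner x,
    show k * ((∑ x ∈ t, c x) * ∑ y ∈ u, c y)
      = (∑ x ∈ t, c x) * (k * ∑ y ∈ u, c y) by ring,
    Finset.sum_mul]
  exact Finset.sum_congr rfl fun x _ => by ring

theorem ultra_sum_bound {X : Type u} [MetricSpace X]
    (hultra : ∀ x y z : X, dist x z ≤ max (dist x y) (dist y z)) :
    ∀ (n : ℕ) (s : Finset X), s.card ≤ n → ∀ (c : X → ℝ) (d : ℝ), 0 ≤ d →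
      (∀ x ∈ s, ∀ y ∈ s, dist x y ≤ d) →
      ∑ x ∈ s, ∑ y ∈ s, c x * c y * dist x y ^ 2 ≤ d ^ 2 * (∑ x ∈ s, c x) ^ 2 := by
  intro n
  induction n with
  | zero =>
    intro s hs c d hd hdist
    rw [Finset.card_eq_zero.mp (Nat.le_zero.mp hs)]
    simp
  | succ n ih =>
    intro s hs c d hd hdist
    classical
    rcases s.eq_empty_or_nonempty with rfl | hne
    · simp
    have hne2 : (s ×ˢ s).Nonempty := hne.product hne
    obtain ⟨⟨x₀, z₀⟩, hmem01, hmax⟩ :=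
      Finset.exists_mem_eq_sup' hne2 (fun p : X × X => dist p.1 p.2)
    set d' := (s ×ˢ s).sup' hne2 (fun p : X × X => dist p.1 p.2) with hd'def
    replace hmax : d' = dist x₀ z₀ := hmax
    have hx₀s : x₀ ∈ s := (Finset.mem_product.mp hmem01).1
    have hz₀s : z₀ ∈ s := (Finset.mem_product.mp hmem01).2
    have hsup : ∀ x ∈ s, ∀ y ∈ s, dist x y ≤ d' := by
      intro x hx y hy
      exact Finset.le_sup' (f := fun p : X × X => dist p.1 p.2)
        (b := (x, y)) (Finset.mem_product.mpr ⟨hx, hy⟩)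
    have hd'd : d' ≤ d := by rw [hmax]; exact hdist _ hx₀s _ hz₀s
    rcases le_or_gt d' 0 with hle | hpos
    · have hzero : ∀ x ∈ s, ∀ y ∈ s, dist x y = 0 := fun x hx y hy =>
        le_antisymm ((hsup x hx y hy).trans hle) dist_nonneg
      have hz : ∑ x ∈ s, ∑ y ∈ s, c x * c y * dist x y ^ 2 = 0 := by
        refine Finset.sum_eq_zero fun x hx => Finset.sum_eq_zero fun y hy => ?_
        rw [hzero x hx y hy]; ring
      rw [hz]; positivity
    · set P := fun y : X => dist x₀ y < d' with hP
      set t := s.filter P with ht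
      set u := s.filter (fun y => ¬ P y) with hu
      have hx₀t : x₀ ∈ t := by
        rw [ht, Finset.mem_filter]
        refine ⟨hx₀s, ?_⟩
        show dist x₀ x₀ < d'
        simpa using hpos
      have hz₀u : z₀ ∈ u := by
        rw [hu, Finset.mem_filter]
        refine ⟨hz₀s, ?_⟩
        show ¬ dist x₀ z₀ < d'
        rw [← hmax]
        exact lt_irrefl d'
      have hts : t ⊆ s := Finset.filter_subset _ _
      have hus : u ⊆ s := Finset.filter_subset _ _
      have htc : t.card ≤ n := by
        have hlt : t.card < s.card := by
          refine Finset.card_lt_card ⟨hts, fun hsub => ?_⟩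
          have h2 : dist x₀ z₀ < d' := (Finset.mem_filter.mp (hsub hz₀s)).2
          rw [← hmax] at h2
          exact absurd h2 (lt_irrefl d')
        omega
      have huc : u.card ≤ n := by
        have hlt : u.card < s.card := by
          refine Finset.card_lt_card ⟨hus, fun hsub => ?_⟩
          have h2 : ¬ dist x₀ x₀ < d' := (Finset.mem_filter.mp (hsub hx₀s)).2
          exact h2 (by show dist x₀ x₀ < d'; simpa using hpos)
        omega
      have hcross : ∀ y ∈ t, ∀ z ∈ u, dist y z = d' := by
        intro y hy z hz
        have hy' : dist x₀ y < d' := (Finset.mem_filter.mp hy).2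
        
        have hz1 : z ∈ s := (Finset.mem_filter.mp hz).1
        have hz2 : ¬ dist x₀ z < d' := (Finset.mem_filter.mp hz).2
        
        have hz3 : dist x₀ z = d' := le_antisymm (hsup _ hx₀s _ hz1) (not_lt.mp hz2)
        have h1 : dist y z ≤ d' := by
          refine (hultra y x₀ z).trans ?_
          rw [max_le_iff]
          exact ⟨by rw [dist_comm]; exact hy'.le, hz3.le⟩
        have h2 : d' ≤ dist y z := by
          have h3 := hultra x₀ y z
          rw [hz3] at h3
          rcases max_cases (dist x₀ y) (dist y z) with ⟨h, _⟩ | ⟨h, _⟩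
          · rw [h] at h3; linarith
          · rw [h] at h3; exact h3
        linarith
      have h1 : ∀ v : Finset X, ∑ x ∈ v, ∑ y ∈ s, c x * c y * dist x y ^ 2
          = ∑ x ∈ v, ∑ y ∈ t, c x * c y * dist x y ^ 2
            + ∑ x ∈ v, ∑ y ∈ u, c x * c y * dist x y ^ 2 := by
        intro v
        rw [← Finset.sum_add_distrib]
        exact Finset.sum_congr rfl fun x _ =>
          (Finset.sum_filter_add_sum_filter_not s P _).symm
      have expand : ∑ x ∈ s, ∑ y ∈ s, c x * c y * dist x y ^ 2
          = (∑ x ∈ t, ∑ y ∈ t, c x * c y * dist x y ^ 2)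
            + (∑ x ∈ u, ∑ y ∈ u, c x * c y * dist x y ^ 2)
            + (∑ x ∈ t, ∑ y ∈ u, c x * c y * dist x y ^ 2)
            + (∑ x ∈ u, ∑ y ∈ t, c x * c y * dist x y ^ 2) := by
        calc ∑ x ∈ s, ∑ y ∈ s, c x * c y * dist x y ^ 2
            = ∑ x ∈ t, ∑ y ∈ s, c x * c y * dist x y ^ 2
              + ∑ x ∈ u, ∑ y ∈ s, c x * c y * dist x y ^ 2 :=
            (Finset.sum_filter_add_sum_filter_not s P _).symm
          _ = _ := by rw [h1 t, h1 u]; ring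
      have htu : ∑ x ∈ t, ∑ y ∈ u, c x * c y * dist x y ^ 2
          = d' ^ 2 * ((∑ x ∈ t, c x) * (∑ y ∈ u, c y)) := by
        rw [Finset.sum_congr rfl fun x hx => Finset.sum_congr rfl fun y hy => by
          rw [hcross x hx y hy]]
        rw [double_sum_const]
      have hut : ∑ x ∈ u, ∑ y ∈ t, c x * c y * dist x y ^ 2
          = d' ^ 2 * ((∑ x ∈ u, c x) * (∑ y ∈ t, c y)) := by
        rw [Finset.sum_congr rfl fun x hx => Finset.sum_congr rfl fun y hy => by
          rw [dist_comm, hcross y hy x hx]]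
        rw [double_sum_const]
      have hsumsplit : ∑ x ∈ s, c x = ∑ x ∈ t, c x + ∑ x ∈ u, c x :=
        (Finset.sum_filter_add_sum_filter_not s P c).symm
      have itt := ih t htc c d' hpos.le (fun x hx y hy => hsup x (hts hx) y (hts hy))
      have iuu := ih u huc c d' hpos.le (fun x hx y hy => hsup x (hus hx) y (hus hy))
      have hdd : d' ^ 2 ≤ d ^ 2 := by nlinarith
      rw [expand, htu, hut, hsumsplit]
      nlinarith [sq_nonneg (∑ x ∈ t, c x + ∑ x ∈ u, c x)]




theorem ultra_neg_type {X : Type u} [MetricSpace X]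
    (hultra : ∀ x y z : X, dist x z ≤ max (dist x y) (dist y z))
    (s : Finset X) (c : X → ℝ) (hc : ∑ x ∈ s, c x = 0) :
    ∑ x ∈ s, ∑ y ∈ s, c x * c y * dist x y ^ 2 ≤ 0 := by
  set d := ∑ p ∈ s ×ˢ s, dist p.1 p.2 with hd
  have hd0 : 0 ≤ d := Finset.sum_nonneg fun p _ => dist_nonneg
  have hbound : ∀ x ∈ s, ∀ y ∈ s, dist x y ≤ d := fun x hx y hy =>
    Finset.single_le_sum (f := fun p : X × X => dist p.1 p.2)
      (fun p _ => dist_nonneg) (a := (x, y)) (Finset.mem_product.mpr ⟨hx, hy⟩)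
  have h := ultra_sum_bound hultra s.card s le_rfl c d hd0 hbound
  rw [hc] at h
  simpa using h

/-- The Gram kernel associated to an ultrametric with base point `p`. -/
noncomputable def ultraK {X : Type u} [MetricSpace X] (p x y : X) : ℝ :=
  (dist x p ^ 2 + dist y p ^ 2 - dist x y ^ 2) / 2

theorem ultraK_psd_mem {X : Type u} [MetricSpace X]
    (hultra : ∀ x y z : X, dist x z ≤ max (dist x y) (dist y z))
    (p : X) (s : Finset X) (hp : p ∈ s) (c : X → ℝ) :
    0 ≤ ∑ x ∈ s, ∑ y ∈ s, c x * c y * ultraK p x y := by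
  classical
  set T := ∑ x ∈ s, c x with hT
  set S := ∑ x ∈ s, c x * dist x p ^ 2 with hS
  set Q := ∑ x ∈ s, ∑ y ∈ s, c x * c y * dist x y ^ 2 with hQ
  set c' := fun z : X => c z - (if z = p then T else 0) with hc'
  have h0 : ∑ x ∈ s, c' x = 0 := by
    rw [hc']
    rw [Finset.sum_sub_distrib, Finset.sum_ite_eq' s p fun _ => T, if_pos hp]
    simp [hT]
  have pointwise : ∀ z w : X, c' z * c' w * dist z w ^ 2
      = c z * c w * dist z w ^ 2
        - (if z = p then T * (c w * dist z w ^ 2) else 0)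
        - (if w = p then c z * T * dist z w ^ 2 else 0)
        + (if z = p then (if w = p then T * T * dist z w ^ 2 else 0) else 0) := by
    intro z w
    by_cases hz : z = p <;> by_cases hw : w = p <;> simp [hc', hz, hw] <;> ring
  have key : ∑ z ∈ s, ∑ w ∈ s, c' z * c' w * dist z w ^ 2 = Q - 2 * T * S := by
    rw [Finset.sum_congr rfl fun z _ => Finset.sum_congr rfl fun w _ => pointwise z w]
    have hsplit : ∀ z ∈ s, ∑ w ∈ s,
        (c z * c w * dist z w ^ 2
          - (if z = p then T * (c w * dist z w ^ 2) else 0)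
          - (if w = p then c z * T * dist z w ^ 2 else 0)
          + (if z = p then (if w = p then T * T * dist z w ^ 2 else 0) else 0))
        = (∑ w ∈ s, c z * c w * dist z w ^ 2)
          - (if z = p then T * ∑ w ∈ s, c w * dist z w ^ 2 else 0)
          - c z * T * dist z p ^ 2
          + (if z = p then T * T * dist z p ^ 2 else 0) := by
      intro z hz
      rw [Finset.sum_add_distrib, Finset.sum_sub_distrib, Finset.sum_sub_distrib]
      have A : ∑ w ∈ s, (if z = p then T * (c w * dist z w ^ 2) else 0)
          = (if z = p then T * ∑ w ∈ s, c w * dist z w ^ 2 else 0) := by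
        by_cases hzp : z = p <;> simp [hzp, Finset.mul_sum]
      have B : ∑ w ∈ s, (if w = p then c z * T * dist z w ^ 2 else 0)
          = c z * T * dist z p ^ 2 := by
        rw [Finset.sum_ite_eq' s p fun w => c z * T * dist z w ^ 2, if_pos hp]
      have C : ∑ w ∈ s, (if z = p then (if w = p then T * T * dist z w ^ 2 else 0) else 0)
          = (if z = p then T * T * dist z p ^ 2 else 0) := by
        by_cases hzp : z = p
        · simp only [hzp, if_true]
          rw [Finset.sum_ite_eq' s p fun w => T * T * dist p w ^ 2, if_pos hp]
        · simp [hzp]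
      rw [A, B, C]
    rw [Finset.sum_congr rfl hsplit]
    rw [Finset.sum_add_distrib, Finset.sum_sub_distrib, Finset.sum_sub_distrib]
    rw [Finset.sum_ite_eq' s p fun z => T * ∑ w ∈ s, c w * dist z w ^ 2, if_pos hp]
    rw [Finset.sum_ite_eq' s p fun z => T * T * dist z p ^ 2, if_pos hp]
    have e1 : ∑ w ∈ s, c w * dist p w ^ 2 = S := by
      rw [hS]
      exact Finset.sum_congr rfl fun w _ => by rw [dist_comm]
    have e2 : ∑ z ∈ s, c z * T * dist z p ^ 2 = T * S := by
      rw [hS, Finset.mul_sum]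
      exact Finset.sum_congr rfl fun z _ => by ring
    rw [e1, e2]
    simp [hQ]
    ring
  have hneg := ultra_neg_type hultra s c' h0
  rw [key] at hneg
  have expandK : ∑ x ∈ s, ∑ y ∈ s, c x * c y * ultraK p x y = (2 * T * S - Q) / 2 := by
    have hrow : ∀ x ∈ s, ∑ y ∈ s, c x * c y * ultraK p x y
        = (c x * dist x p ^ 2 * T + c x * S - ∑ y ∈ s, c x * c y * dist x y ^ 2) / 2 := by
      intro x hx
      have : ∀ y : X, c x * c y * ultraK p x y
          = (c x * c y * dist x p ^ 2 + c x * (c y * dist y p ^ 2)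
            - c x * c y * dist x y ^ 2) / 2 := by
        intro y; rw [ultraK]; ring
      rw [Finset.sum_congr rfl fun y _ => this y]
      rw [← Finset.sum_div]
      congr 1
      rw [Finset.sum_sub_distrib, Finset.sum_add_distrib]
      congr 2
      · rw [hT, Finset.mul_sum]
        exact Finset.sum_congr rfl fun y _ => by ring
      · rw [hS, Finset.mul_sum]
    rw [Finset.sum_congr rfl hrow, ← Finset.sum_div]
    congr 1
    rw [Finset.sum_sub_distrib, Finset.sum_add_distrib, ← Finset.sum_mul, ← Finset.sum_mul,
      ← hT, ← hS, ← hQ]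
    ring
  rw [expandK]
  linarith





theorem ultraK_symm {X : Type u} [MetricSpace X] (p x y : X) :
    ultraK p x y = ultraK p y x := by
  unfold ultraK; rw [dist_comm x y]; ring

theorem ultraK_self {X : Type u} [MetricSpace X] (p x : X) :
    ultraK p x x = dist x p ^ 2 := by
  unfold ultraK; simp

theorem ultraK_psd {X : Type u} [MetricSpace X]
    (hultra : ∀ x y z : X, dist x z ≤ max (dist x y) (dist y z))
    (p : X) (s : Finset X) (c : X → ℝ) :
    0 ≤ ∑ x ∈ s, ∑ y ∈ s, c x * c y * ultraK p x y := by
  classical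
  by_cases hp : p ∈ s
  · exact ultraK_psd_mem hultra p s hp c
  · set c0 := fun z : X => if z = p then 0 else c z with hc0
    have h := ultraK_psd_mem hultra p (insert p s) (Finset.mem_insert_self p s) c0
    rw [Finset.sum_insert hp] at h
    have hrowp : ∑ y ∈ insert p s, c0 p * c0 y * ultraK p p y = 0 :=
      Finset.sum_eq_zero fun y _ => by simp [hc0]
    have hinner : ∀ x ∈ s, ∑ y ∈ insert p s, c0 x * c0 y * ultraK p x y
        = ∑ y ∈ s, c x * c y * ultraK p x y := by
      intro x hx
      have hxp : x ≠ p := fun h' => hp (h' ▸ hx)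
      rw [Finset.sum_insert hp]
      have : c0 x * c0 p * ultraK p x p = 0 := by simp [hc0]
      rw [this, zero_add]
      refine Finset.sum_congr rfl fun y hy => ?_
      have hyp : y ≠ p := fun h' => hp (h' ▸ hy)
      simp [hc0, hxp, hyp]
    rw [hrowp, Finset.sum_congr rfl hinner, zero_add] at h
    exact h

/-- The bilinear form on finitely supported functions induced by `ultraK`. -/
noncomputable def ultraB {X : Type u} [MetricSpace X] (p : X) :
    (X →₀ ℝ) →ₗ[ℝ] (X →₀ ℝ) →ₗ[ℝ] ℝ :=
  Finsupp.lift ((X →₀ ℝ) →ₗ[ℝ] ℝ) ℝ X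
    (fun x => Finsupp.lift ℝ ℝ X (fun y => ultraK p x y))

theorem ultraB_apply {X : Type u} [MetricSpace X] (p : X) (u v : X →₀ ℝ) :
    ultraB p u v = ∑ x ∈ u.support, ∑ y ∈ v.support, u x * v y * ultraK p x y := by
  rw [ultraB, Finsupp.lift_apply]
  rw [Finsupp.sum, LinearMap.coe_sum, Finset.sum_apply]
  refine Finset.sum_congr rfl fun x _ => ?_
  rw [LinearMap.smul_apply, Finsupp.lift_apply, Finsupp.sum, smul_eq_mul, Finset.mul_sum]
  exact Finset.sum_congr rfl fun y _ => by rw [smul_eq_mul]; ring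

theorem ultraB_symm {X : Type u} [MetricSpace X] (p : X) (u v : X →₀ ℝ) :
    ultraB p u v = ultraB p v u := by
  rw [ultraB_apply, ultraB_apply, Finset.sum_comm]
  exact Finset.sum_congr rfl fun y _ => Finset.sum_congr rfl fun x _ => by
    rw [ultraK_symm]; ring

theorem ultraB_nonneg {X : Type u} [MetricSpace X]
    (hultra : ∀ x y z : X, dist x z ≤ max (dist x y) (dist y z))
    (p : X) (u : X →₀ ℝ) : 0 ≤ ultraB p u u := by
  rw [ultraB_apply]
  exact ultraK_psd hultra p u.support u

theorem ultraB_cauchy_schwarz {X : Type u} [MetricSpace X]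
    (hultra : ∀ x y z : X, dist x z ≤ max (dist x y) (dist y z))
    (p : X) (u v : X →₀ ℝ) :
    (ultraB p u v) ^ 2 ≤ ultraB p u u * ultraB p v v := by
  have key : ∀ t : ℝ, 0 ≤ ultraB p u u + 2 * t * ultraB p u v + t ^ 2 * ultraB p v v := by
    intro t
    have h := ultraB_nonneg hultra p (u + t • v)
    have expand : ultraB p (u + t • v) (u + t • v)
        = ultraB p u u + 2 * t * ultraB p u v + t ^ 2 * ultraB p v v := by
      simp only [map_add, map_smul, LinearMap.add_apply, LinearMap.smul_apply,
        smul_eq_mul]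
      rw [ultraB_symm p v u]
      ring
    rwa [expand] at h
  have h2 : ∀ t : ℝ, 0 ≤ ultraB p v v * (t * t) + 2 * ultraB p u v * t + ultraB p u u := by
    intro t
    have e : ultraB p v v * (t * t) + 2 * ultraB p u v * t + ultraB p u u
        = ultraB p u u + 2 * t * ultraB p u v + t ^ 2 * ultraB p v v := by ring
    rw [e]
    exact key t
  have h3 := discrim_le_zero h2
  rw [discrim] at h3
  have h4 : (2 * ultraB p u v) ^ 2 - 4 * (ultraB p v v) * (ultraB p u u) ≤ 0 := h3
  nlinarith [h4]















section Quot

variable {X : Type u} [MetricSpace X]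

/-- Null space of the form `ultraB`. -/
noncomputable def ultraNull (p : X) : Submodule ℝ (X →₀ ℝ) where
  carrier := {v | ∀ w, ultraB p v w = 0}
  add_mem' := fun ha hb w => by
    rw [map_add, LinearMap.add_apply, ha w, hb w, add_zero]
  zero_mem' := fun w => by rw [map_zero, LinearMap.zero_apply]
  smul_mem' := fun r v hv w => by
    rw [map_smul, LinearMap.smul_apply, hv w, smul_zero]

theorem mem_ultraNull_iff
    (hultra : ∀ x y z : X, dist x z ≤ max (dist x y) (dist y z))
    {p : X} {v : X →₀ ℝ} :
    v ∈ ultraNull p ↔ ultraB p v v = 0 := by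
  constructor
  · intro h; exact h v
  · intro h w
    have hcs := ultraB_cauchy_schwarz hultra p v w
    rw [h, zero_mul] at hcs
    have h2 : (ultraB p v w) ^ 2 = 0 := le_antisymm hcs (sq_nonneg _)
    exact pow_eq_zero_iff two_ne_zero |>.mp h2

/-- Pre-Hilbert space: the quotient of finitely supported functions by the null space. -/
abbrev UltraQ (p : X) : Type u := (X →₀ ℝ) ⧸ ultraNull p

/-- Intermediate: `ultraB` with second argument descended to the quotient. -/
noncomputable def ultraQB1 (p : X) : (X →₀ ℝ) →ₗ[ℝ] (UltraQ p →ₗ[ℝ] ℝ) where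
  toFun u := Submodule.liftQ (ultraNull p) (ultraB p u)
    (fun v hv => by rw [LinearMap.mem_ker, ultraB_symm]; exact hv u)
  map_add' u1 u2 := Submodule.linearMap_qext _ (by
    ext w
    simp [Submodule.liftQ_apply])
  map_smul' r u := Submodule.linearMap_qext _ (by
    ext w
    simp [Submodule.liftQ_apply])

/-- The inner product descended to the quotient. -/
noncomputable def ultraQB (p : X) : UltraQ p →ₗ[ℝ] UltraQ p →ₗ[ℝ] ℝ :=
  Submodule.liftQ (ultraNull p) (ultraQB1 p)
    (fun v hv => by
      rw [LinearMap.mem_ker]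
      refine Submodule.linearMap_qext _ (LinearMap.ext fun w => ?_)
      simp [ultraQB1, Submodule.liftQ_apply, hv w])

theorem ultraQB_mk (p : X) (u v : X →₀ ℝ) :
    ultraQB p (Submodule.Quotient.mk u) (Submodule.Quotient.mk v) = ultraB p u v := by
  simp [ultraQB, ultraQB1, Submodule.liftQ_apply]

/-- The inner product space core structure on the quotient. -/
noncomputable def ultraCore
    (hultra : ∀ x y z : X, dist x z ≤ max (dist x y) (dist y z))
    (p : X) : InnerProductSpace.Core ℝ (UltraQ p) where
  inner x y := ultraQB p x y
  conj_inner_symm x y := by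
    obtain ⟨u, rfl⟩ := Submodule.Quotient.mk_surjective _ x
    obtain ⟨v, rfl⟩ := Submodule.Quotient.mk_surjective _ y
    simp only [starRingEnd_apply, star_trivial]
    rw [ultraQB_mk, ultraQB_mk, ultraB_symm]
  re_inner_nonneg x := by
    obtain ⟨u, rfl⟩ := Submodule.Quotient.mk_surjective _ x
    simpa [ultraQB_mk] using ultraB_nonneg hultra p u
  definite x h := by
    obtain ⟨u, rfl⟩ := Submodule.Quotient.mk_surjective _ x
    have h' : ultraB p u u = 0 := by
      have h2 : ultraQB p (Submodule.Quotient.mk u) (Submodule.Quotient.mk u) = 0 := h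
      rwa [ultraQB_mk] at h2
    exact (Submodule.Quotient.mk_eq_zero _).mpr ((mem_ultraNull_iff hultra).mpr h')
  add_left x y z := by
    obtain ⟨u, rfl⟩ := Submodule.Quotient.mk_surjective _ x
    obtain ⟨v, rfl⟩ := Submodule.Quotient.mk_surjective _ y
    obtain ⟨w, rfl⟩ := Submodule.Quotient.mk_surjective _ z
    show ultraQB p (Submodule.Quotient.mk u + Submodule.Quotient.mk v)
        (Submodule.Quotient.mk w)
      = ultraQB p (Submodule.Quotient.mk u) (Submodule.Quotient.mk w)
        + ultraQB p (Submodule.Quotient.mk v) (Submodule.Quotient.mk w)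
    rw [← Submodule.Quotient.mk_add, ultraQB_mk, ultraQB_mk, ultraQB_mk, map_add,
      LinearMap.add_apply]
  smul_left x y r := by
    obtain ⟨u, rfl⟩ := Submodule.Quotient.mk_surjective _ x
    obtain ⟨v, rfl⟩ := Submodule.Quotient.mk_surjective _ y
    show ultraQB p (r • Submodule.Quotient.mk u) (Submodule.Quotient.mk v)
      = (starRingEnd ℝ) r * ultraQB p (Submodule.Quotient.mk u) (Submodule.Quotient.mk v)
    rw [← Submodule.Quotient.mk_smul, ultraQB_mk, ultraQB_mk, map_smul,
      LinearMap.smul_apply, smul_eq_mul, starRingEnd_apply, star_trivial]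

end Quot


theorem ultraB_single {X : Type u} [MetricSpace X] (p x y : X) :
    ultraB p (Finsupp.single x 1) (Finsupp.single y 1) = ultraK p x y := by
  rw [ultraB_apply, Finsupp.support_single_ne_zero x one_ne_zero,
    Finsupp.support_single_ne_zero y one_ne_zero, Finset.sum_singleton,
    Finset.sum_singleton, Finsupp.single_eq_same, Finsupp.single_eq_same]
  ring

section Mk

variable {X : Type u} [MetricSpace X]

noncomputable def ultraQmk (p : X) (v : X →₀ ℝ) : UltraQ p :=
  Submodule.Quotient.mk v

theorem ultraQmk_add (p : X) (v w : X →₀ ℝ) :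
    ultraQmk p (v + w) = ultraQmk p v + ultraQmk p w := by
  simp [ultraQmk]

theorem ultraQmk_smul (p : X) (r : ℝ) (v : X →₀ ℝ) :
    ultraQmk p (r • v) = r • ultraQmk p v := by
  simp [ultraQmk]

theorem ultraQmk_zero (p : X) : ultraQmk p 0 = 0 := by
  simp [ultraQmk]

theorem ultraQmk_sub (p : X) (v w : X →₀ ℝ) :
    ultraQmk p (v - w) = ultraQmk p v - ultraQmk p w := by
  simp [ultraQmk]

theorem ultraQmk_surjective (p : X) : Function.Surjective (ultraQmk p) :=
  fun w => Submodule.Quotient.mk_surjective _ w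

theorem ultraQB_mk' (p : X) (u v : X →₀ ℝ) :
    ultraQB p (ultraQmk p u) (ultraQmk p v) = ultraB p u v :=
  ultraQB_mk p u v

theorem ultraCore_inner {X : Type u} [MetricSpace X]
    (hultra : ∀ x y z : X, dist x z ≤ max (dist x y) (dist y z))
    (p : X) (x y : UltraQ p) : (ultraCore hultra p).inner x y = ultraQB p x y := rfl

end Mk


/-- Lemin: every ultrametric space of weight (density) at most `τ = |I|`, for `I`
infinite, embeds isometrically into the generalized Hilbert space `H^τ = ℓ²(I)`. -/
theorem ultrametric_isometric_embedding_into_generalized_hilbert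
    (X : Type u) [MetricSpace X]
    (hultra : ∀ x y z : X, dist x z ≤ max (dist x y) (dist y z))
    (I : Type v) [Infinite I]
    (hdense : ∃ D : Set X, Dense D ∧
      Cardinal.lift.{v} (Cardinal.mk D) ≤ Cardinal.lift.{u} (Cardinal.mk I)) :
    ∃ f : X → lp (fun _ : I => ℝ) 2, Isometry f := by
  classical
  rcases isEmpty_or_nonempty X with hX | hX
  · exact ⟨fun x => (IsEmpty.false x).elim, fun x => (IsEmpty.false x).elim⟩
  obtain ⟨D, hD, hDcard⟩ := hdense
  obtain ⟨p⟩ := hX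
  -- the pre-Hilbert space
  letI cd : InnerProductSpace.Core ℝ (UltraQ p) := ultraCore hultra p
  letI : NormedAddCommGroup (UltraQ p) := InnerProductSpace.Core.toNormedAddCommGroup (𝕜 := ℝ) (F := UltraQ p)
  letI : InnerProductSpace ℝ (UltraQ p) := InnerProductSpace.ofCore cd.toCore
  set ψ : X → UltraQ p := fun x => ultraQmk p (Finsupp.single x 1) with hψdef
  have hinner : ∀ u : X →₀ ℝ, (inner ℝ (ultraQmk p u) (ultraQmk p u) : ℝ) = ultraB p u u := by
    intro u
    rw [show (inner ℝ (ultraQmk p u) (ultraQmk p u) : ℝ)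
        = (ultraCore hultra p).inner (ultraQmk p u) (ultraQmk p u) from rfl]
    rw [ultraCore_inner, ultraQB_mk']
  have hψ : ∀ x y : X, dist (ψ x) (ψ y) = dist x y := by
    intro x y
    have hBval : ultraB p (Finsupp.single x 1 - Finsupp.single y 1)
        (Finsupp.single x 1 - Finsupp.single y 1) = dist x y ^ 2 := by
      simp only [map_sub, LinearMap.sub_apply, ultraB_single]
      unfold ultraK
      rw [dist_self, dist_self, dist_comm y x]
      ring
    have hsub : ψ x - ψ y = ultraQmk p (Finsupp.single x 1 - Finsupp.single y 1) := by
      rw [hψdef, ultraQmk_sub]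
    rw [dist_eq_norm, norm_eq_sqrt_real_inner, hsub, hinner, hBval,
      Real.sqrt_sq dist_nonneg]
  -- the Hilbert space
  set H := UniformSpace.Completion (UltraQ p) with hHdef
  set φ : X → H := fun x => ((ψ x : UltraQ p) : H) with hφdef
  have hφ : ∀ x y : X, dist (φ x) (φ y) = dist x y := fun x y => by
    rw [hφdef]
    simp only
    rw [UniformSpace.Completion.dist_eq, hψ]
  have hφcont : Continuous φ := by
    apply Isometry.continuous
    intro a b
    rw [edist_dist, edist_dist, hφ]
  -- span of the range of φ is dense in H
  have hspan : Dense (Submodule.span ℝ (Set.range φ) : Set H) := by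
    have h1 : Set.range ((↑) : UltraQ p → H) ⊆ (Submodule.span ℝ (Set.range φ) : Set H) := by
      rintro _ ⟨w, rfl⟩
      obtain ⟨u, rfl⟩ := ultraQmk_surjective p w
      induction u using Finsupp.induction_linear with
      | zero =>
        rw [ultraQmk_zero]
        rw [show ((0 : UltraQ p) : H) = 0 from UniformSpace.Completion.coe_zero]
        exact Submodule.zero_mem _
      | add f g hf hg =>
        rw [ultraQmk_add, UniformSpace.Completion.coe_add]
        exact Submodule.add_mem _ hf hg
      | single a b =>
        have : Finsupp.single a b = b • Finsupp.single a (1 : ℝ) := by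
          rw [Finsupp.smul_single', mul_one]
        rw [this, ultraQmk_smul, UniformSpace.Completion.coe_smul]
        exact Submodule.smul_mem _ b (Submodule.subset_span ⟨a, rfl⟩)
    have h2 := UniformSpace.Completion.denseRange_coe (α := UltraQ p)
    exact h2.mono h1
  -- rational combinations over the dense set D
  set g : (D →₀ ℚ) → H := fun l => l.sum fun d q => (q : ℝ) • φ d with hgdef
  set Q : Set H := Set.range g with hQdef
  have hQadd : ∀ a ∈ Q, ∀ b ∈ Q, a + b ∈ Q := by
    rintro _ ⟨l1, rfl⟩ _ ⟨l2, rfl⟩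
    refine ⟨l1 + l2, ?_⟩
    rw [hgdef]
    simp only
    rw [Finsupp.sum_add_index]
    · intro d _; rw [Rat.cast_zero, zero_smul]
    · intro d _ q1 q2; rw [Rat.cast_add, add_smul]
  have hQzero : (0 : H) ∈ Q := ⟨0, by rw [hgdef]; simp [Finsupp.sum_zero_index]⟩
  have hQsmulq : ∀ (q : ℚ), ∀ a ∈ Q, (q : ℝ) • a ∈ Q := by
    rintro q _ ⟨l, rfl⟩
    refine ⟨q • l, ?_⟩
    rw [hgdef]
    simp only
    rw [Finsupp.sum_smul_index]
    · rw [Finsupp.smul_sum]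
      refine Finsupp.sum_congr fun d _ => ?_
      rw [Rat.cast_mul, mul_smul]
    · intro d; rw [Rat.cast_zero, zero_smul]
  have hQφD : ∀ d : D, φ d ∈ Q := by
    intro d
    refine ⟨Finsupp.single d 1, ?_⟩
    rw [hgdef]
    simp only
    rw [Finsupp.sum_single_index]
    · rw [Rat.cast_one, one_smul]
    · rw [Rat.cast_zero, zero_smul]
  set C : Set H := closure Q with hCdef
  have hCclosed : IsClosed C := isClosed_closure
  have hCadd : ∀ a ∈ C, ∀ b ∈ C, a + b ∈ C := by
    intro a ha b hb
    have : (a, b) ∈ closure (Q ×ˢ Q) := by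
      rw [closure_prod_eq]; exact ⟨ha, hb⟩
    have hmaps : Set.MapsTo (fun z : H × H => z.1 + z.2) (Q ×ˢ Q) Q := by
      rintro ⟨z1, z2⟩ ⟨h1, h2⟩
      exact hQadd z1 h1 z2 h2
    exact hmaps.closure (continuous_fst.add continuous_snd) this
  have hCsmulq : ∀ (q : ℚ), ∀ a ∈ C, (q : ℝ) • a ∈ C := by
    intro q a ha
    have hmaps : Set.MapsTo (fun z : H => (q : ℝ) • z) Q Q := fun z hz => hQsmulq q z hz
    exact hmaps.closure (continuous_const_smul (q : ℝ)) ha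
  have hCsmul : ∀ (r : ℝ), ∀ a ∈ C, r • a ∈ C := by
    intro r a ha
    have hTclosed : IsClosed {r : ℝ | r • a ∈ C} :=
      hCclosed.preimage (continuous_id.smul continuous_const)
    have hTrat : Set.range ((↑) : ℚ → ℝ) ⊆ {r : ℝ | r • a ∈ C} := by
      rintro _ ⟨q, rfl⟩
      exact hCsmulq q a ha
    have hdense2 : closure (Set.range ((↑) : ℚ → ℝ)) = Set.univ :=
      Rat.denseRange_cast.closure_eq
    have : (Set.univ : Set ℝ) ⊆ {r : ℝ | r • a ∈ C} := by
      rw [← hdense2]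
      exact closure_minimal hTrat hTclosed
    exact this (Set.mem_univ r)
  have hCφ : ∀ x : X, φ x ∈ C := by
    intro x
    have hx : x ∈ closure (D : Set X) := hD x
    have h1 : φ x ∈ φ '' closure (D : Set X) := ⟨x, hx, rfl⟩
    have h2 : φ '' closure (D : Set X) ⊆ closure (φ '' D) :=
      image_closure_subset_closure_image hφcont
    refine closure_mono ?_ (h2 h1)
    rintro _ ⟨d, hd, rfl⟩
    exact hQφD ⟨d, hd⟩
  have hCspan : (Submodule.span ℝ (Set.range φ) : Set H) ⊆ C := by
    intro h hh
    induction hh using Submodule.span_induction with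
    | mem z hz => obtain ⟨x, rfl⟩ := hz; exact hCφ x
    | zero => exact subset_closure hQzero
    | add a b _ _ ha hb => exact hCadd a ha b hb
    | smul r a _ ha => exact hCsmul r a ha
  have hCuniv : C = Set.univ := by
    apply Set.eq_univ_of_univ_subset
    calc (Set.univ : Set H) = closure (Submodule.span ℝ (Set.range φ) : Set H) :=
          hspan.closure_eq.symm
      _ ⊆ closure C := closure_mono hCspan
      _ = C := hCclosed.closure_eq
  -- a Hilbert basis of H
  obtain ⟨w, b, hb⟩ := exists_hilbertBasis ℝ H
  -- cardinality of the basis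
  have hwQ : ∃ χ : w → H, (∀ e, χ e ∈ Q) ∧ Function.Injective χ := by
    have hchoose : ∀ e : w, ∃ q ∈ Q, dist (e : H) q < 0.7 := by
      intro e
      have he : (e : H) ∈ closure Q := by rw [← hCdef, hCuniv]; trivial
      rw [Metric.mem_closure_iff] at he
      obtain ⟨q, hq1, hq2⟩ := he (0.7) (by norm_num)
      exact ⟨q, hq1, hq2⟩
    choose χ hχQ hχdist using hchoose
    refine ⟨χ, hχQ, ?_⟩
    intro e e' hee
    by_contra hne
    have horm := b.orthonormal
    have h12 : ‖(e : H) - (e' : H)‖ ^ 2 = 2 := by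
      rw [norm_sub_sq_real]
      have h1 : ‖(e : H)‖ = 1 := by
        have := horm.1 e; rwa [hb] at this
      have h2 : ‖(e' : H)‖ = 1 := by
        have := horm.1 e'; rwa [hb] at this
      have h3 : (inner ℝ (b e) (b e') : ℝ) = 0 := horm.2 hne
      rw [hb] at h3
      rw [h1, h2]
      rw [show ((↑) : w → H) e = (e : H) from rfl, show ((↑) : w → H) e' = (e' : H) from rfl] at h3
      rw [h3]
      norm_num
    have hd2 : dist (e : H) (e' : H) ≤ dist (e : H) (χ e) + dist (χ e') (e' : H) := by
      calc dist (e : H) (e' : H) ≤ dist (e : H) (χ e) + dist (χ e) (e' : H) := dist_triangle _ _ _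
        _ = dist (e : H) (χ e) + dist (χ e') (e' : H) := by rw [hee]
    have hd3 : dist (χ e') (e' : H) < 0.7 := by rw [dist_comm]; exact hχdist e'
    have hd4 : dist (e : H) (e' : H) < 1.4 := by
      have := hχdist e
      linarith
    have hd5 : dist (e : H) (e' : H) ^ 2 = 2 := by
      rw [dist_eq_norm]; exact h12
    nlinarith [dist_nonneg (x := (e : H)) (y := (e' : H))]
  obtain ⟨χ, hχQ, hχinj⟩ := hwQ
  have hcard : Cardinal.lift.{v} (Cardinal.mk w) ≤ Cardinal.lift.{u} (Cardinal.mk I) := by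
    have h1 : Cardinal.mk w ≤ Cardinal.mk Q := by
      refine Cardinal.mk_le_of_injective (f := fun e => (⟨χ e, hχQ e⟩ : Q)) ?_
      intro e e' h
      exact hχinj (congrArg Subtype.val h)
    have h2 : Cardinal.mk Q ≤ Cardinal.mk (D →₀ ℚ) := by
      rw [hQdef]
      exact Cardinal.mk_range_le
    haveI : Nonempty X := ⟨p⟩
    have hDne : D.Nonempty := hD.nonempty
    haveI : Nonempty ↥D := hDne.to_subtype
    have h3 : Cardinal.mk (D →₀ ℚ) ≤ max (Cardinal.mk D) Cardinal.aleph0 := by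
      have := Cardinal.mk_finsupp_lift_of_infinite' (↥D) ℚ
      rw [Cardinal.lift_uzero] at this
      rw [this]
      apply max_le_max le_rfl
      rw [Cardinal.mkRat, Cardinal.lift_aleph0]
    have h4 : Cardinal.lift.{v} (Cardinal.mk w) ≤
        Cardinal.lift.{v} (max (Cardinal.mk D) Cardinal.aleph0) :=
      Cardinal.lift_monotone ((h1.trans h2).trans h3)
    rw [Cardinal.lift_max] at h4
    refine h4.trans ?_
    rw [max_le_iff]
    constructor
    · exact hDcard
    · rw [Cardinal.lift_aleph0]
      refine le_trans ?_ (Cardinal.lift_monotone (Cardinal.aleph0_le_mk I))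
      rw [Cardinal.lift_aleph0]
  obtain ⟨emb⟩ := Cardinal.lift_mk_le'.mp hcard
  -- orthonormal family in lp
  set v' : w → lp (fun _ : I => ℝ) 2 := fun e => lp.single 2 (emb e) 1 with hv'def
  have hortho : Orthonormal ℝ v' := by
    rw [orthonormal_iff_ite]
    intro i j
    rw [hv'def]
    simp only
    rw [lp.inner_single_left]
    rw [lp.single_apply]
    by_cases hij : i = j
    · subst hij
      simp
    · have : emb j ≠ emb i := fun h => hij (emb.injective h).symm
      simp [hij, this]
  set L := hortho.orthogonalFamily.linearIsometry with hLdef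
  refine ⟨fun x => L (b.repr (φ x)), ?_⟩
  apply Isometry.of_dist_eq
  intro x y
  rw [L.isometry.dist_eq, b.repr.dist_map]
  exact hφ x y
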